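/- Let c ≥ 1 and let A be a finite-dimensional commutative unital ℝ-algebra with a ℤ/cℤ-grading A = ⊕_{k ∈ ℤ/cℤ} A_k (so A_k·A_l ⊆ A_{k+l} and 1 ∈ A_0). Suppose there is an ℝ-linear form φ_0 : A_0 → ℝ with φ_0(1) = 1 such that the bilinear form Q_0(a,b) = φ_0(ab) on A_0 is positive definite. Let k be an integer with gcd(k, c) = 1. If there exists a ∈ A_k (the graded piece of degree k mod c) such that multiplication by a is injective on A, then A is semisimple (its Jacobson radical is zero). -/

import Mathlib

set_option linter.unusedSectionVars false
set_option maxHeartbeats 1000000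

open DirectSum LinearMap RealInnerProductSpace

section Aux

variable {c : ℕ} [NeZero c] {A : Type*} [CommRing A] [Algebra ℝ A] [FiniteDimensional ℝ A]
  {Agr : ZMod c → Submodule ℝ A}

/-- Projection onto the degree-`j` graded component, as an endomorphism of `A`. -/
noncomputable def grProj (h : DirectSum.IsInternal Agr) (j : ZMod c) : A →ₗ[ℝ] A :=
  (Agr j).subtype ∘ₗ (DirectSum.component ℝ (ZMod c) (fun i => Agr i) j) ∘ₗ
    (LinearEquiv.ofBijective (DirectSum.coeLinearMap Agr) h).symm.toLinearMap

lemma grProj_mem (h : DirectSum.IsInternal Agr) (j : ZMod c) (x : A) :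
    grProj h j x ∈ Agr j := by
  simp only [grProj, coe_comp, Function.comp_apply, Submodule.coe_subtype]
  exact Subtype.coe_prop _

lemma grProj_of_mem_same (h : DirectSum.IsInternal Agr) {j : ZMod c} {x : A}
    (hx : x ∈ Agr j) : grProj h j x = x := by
  simp only [grProj, coe_comp, Function.comp_apply, Submodule.coe_subtype,
    LinearEquiv.coe_coe]
  rw [← DirectSum.apply_eq_component, h.ofBijective_coeLinearMap_of_mem hx]

lemma grProj_of_mem_ne (h : DirectSum.IsInternal Agr) {i j : ZMod c} (hij : i ≠ j) {x : A}
    (hx : x ∈ Agr i) : grProj h j x = 0 := by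
  simp only [grProj, coe_comp, Function.comp_apply, Submodule.coe_subtype,
    LinearEquiv.coe_coe]
  rw [← DirectSum.apply_eq_component, h.ofBijective_coeLinearMap_of_mem_ne hij hx]
  rfl

lemma grProj_sum (h : DirectSum.IsInternal Agr) (x : A) :
    ∑ j : ZMod c, grProj h j x = x := by
  have hx : x ∈ (⊤ : Submodule ℝ A) := trivial
  rw [← h.submodule_iSup_eq_top] at hx
  refine Submodule.iSup_induction (motive := fun x => ∑ j : ZMod c, grProj h j x = x) Agr hx
    (fun i x hx => ?_) (by simp) (fun x y hx hy => ?_)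
  · show ∑ j : ZMod c, grProj h j x = x
    rw [Finset.sum_eq_single i]
    · exact grProj_of_mem_same h hx
    · intro j _ hj; exact grProj_of_mem_ne h (Ne.symm hj) hx
    · intro hi; exact absurd (Finset.mem_univ i) hi
  · show ∑ j : ZMod c, grProj h j (x + y) = x + y
    simp only [map_add, Finset.sum_add_distrib, hx, hy]

lemma grProj_idem (h : DirectSum.IsInternal Agr) (j : ZMod c) (x : A) :
    grProj h j (grProj h j x) = grProj h j x :=
  grProj_of_mem_same h (grProj_mem h j x)

lemma grProj_mul_of_mem_zero (h : DirectSum.IsInternal Agr)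
    (hgrmul : ∀ (k l : ZMod c) (x y : A), x ∈ Agr k → y ∈ Agr l → x * y ∈ Agr (k + l))
    {v : A} (hv : v ∈ Agr 0) (j : ZMod c) (x : A) :
    grProj h j (v * x) = v * grProj h j x := by
  have hx : x ∈ (⊤ : Submodule ℝ A) := trivial
  rw [← h.submodule_iSup_eq_top] at hx
  refine Submodule.iSup_induction (motive := fun x => grProj h j (v * x) = v * grProj h j x) Agr hx
    (fun i x hx => ?_) (by simp) (fun x y hx hy => ?_)
  · show grProj h j (v * x) = v * grProj h j x
    have hvx : v * x ∈ Agr i := by simpa using hgrmul 0 i v x hv hx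
    rcases eq_or_ne i j with rfl | hij
    · rw [grProj_of_mem_same h hvx, grProj_of_mem_same h hx]
    · rw [grProj_of_mem_ne h hij hvx, grProj_of_mem_ne h hij hx, mul_zero]
  · show grProj h j (v * (x + y)) = v * grProj h j (x + y)
    simp only [mul_add, map_add, hx, hy]

lemma trace_mulLeft_eq_zero (h : DirectSum.IsInternal Agr)
    (hgrmul : ∀ (k l : ZMod c) (x y : A), x ∈ Agr k → y ∈ Agr l → x * y ∈ Agr (k + l))
    {d : ZMod c} (hd : d ≠ 0) {z : A} (hz : z ∈ Agr d) :
    LinearMap.trace ℝ A (LinearMap.mulLeft ℝ z) = 0 := by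
  set f := LinearMap.mulLeft ℝ z with hf
  have hid : f = ∑ j : ZMod c, f ∘ₗ grProj h j := by
    ext x
    simp only [LinearMap.coe_sum, Finset.sum_apply, coe_comp, Function.comp_apply]
    rw [← map_sum]
    rw [show (∑ j : ZMod c, grProj h j x) = x from grProj_sum h x]
  rw [hid, map_sum]
  refine Finset.sum_eq_zero fun j _ => ?_
  have h1 : f ∘ₗ grProj h j = (f * grProj h j) * grProj h j := by
    ext x
    simp only [coe_comp, Function.comp_apply, Module.End.mul_apply]
    rw [grProj_idem h j x]
  have h2 : grProj h j * (f * grProj h j) = 0 := by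
    ext x
    have hmem : z * grProj h j x ∈ Agr (d + j) := hgrmul d j _ _ hz (grProj_mem h j x)
    have hne : (d + j) ≠ j := fun hdj => hd (by simpa using congrArg (fun t => t - j) hdj)
    simp only [Module.End.mul_apply, LinearMap.zero_apply, hf, mulLeft_apply]
    exact grProj_of_mem_ne h hne hmem
  rw [h1, LinearMap.trace_mul_comm, h2, map_zero]

end Aux

lemma trace_comp_self_pos {V : Type*} [NormedAddCommGroup V] [InnerProductSpace ℝ V]
    [FiniteDimensional ℝ V] (T : V →ₗ[ℝ] V)
    (hsym : ∀ x y : V, ⟪T x, y⟫ = ⟪x, T y⟫) (hT : T ≠ 0) :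
    0 < LinearMap.trace ℝ V (T * T) := by
  set b := stdOrthonormalBasis ℝ V
  have htr : LinearMap.trace ℝ V (T * T) = ∑ i, ⟪T (b i), T (b i)⟫ := by
    rw [LinearMap.trace_eq_matrix_trace ℝ b.toBasis, Matrix.trace]
    refine Finset.sum_congr rfl fun i _ => ?_
    rw [Matrix.diag_apply, LinearMap.toMatrix_apply, OrthonormalBasis.coe_toBasis,
      OrthonormalBasis.coe_toBasis_repr_apply, OrthonormalBasis.repr_apply_apply,
      Module.End.mul_apply, hsym]
  rw [htr]
  have hex : ∃ i, T (b i) ≠ 0 := by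
    by_contra hall
    push_neg at hall
    exact hT (b.toBasis.ext fun i => by
      simpa [OrthonormalBasis.coe_toBasis] using hall i)
  obtain ⟨i, hi⟩ := hex
  refine Finset.sum_pos' (fun j _ => real_inner_self_nonneg) ⟨i, Finset.mem_univ i, ?_⟩
  exact lt_of_le_of_ne real_inner_self_nonneg
    fun h0 => hi ((@inner_self_eq_zero ℝ _ _ _ _ _).mp h0.symm)

/-- Let `A` be a finite-dimensional commutative unital ℝ-algebra with a
`ℤ/cℤ`-grading (`c ≥ 1`), and suppose the bilinear form `Q₀(a,b) = φ₀(ab)` on `A₀` is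
positive definite for some linear form `φ₀` with `φ₀ 1 = 1`. Let `k` be an integer with
`gcd(k, c) = 1`. If there exists `a ∈ A_k` such that multiplication by `a` is injective
on `A`, then `A` is semisimple (its Jacobson radical is zero). -/
theorem semisimple_of_injective_mul_coprime_degree_element
    (c : ℕ) (hc : 1 ≤ c)
    (A : Type*) [CommRing A] [Algebra ℝ A] [FiniteDimensional ℝ A]
    (Agr : ZMod c → Submodule ℝ A)
    (hinternal : DirectSum.IsInternal Agr)
    (hone : (1 : A) ∈ Agr 0)
    (hgrmul : ∀ (k l : ZMod c) (x y : A), x ∈ Agr k → y ∈ Agr l → x * y ∈ Agr (k + l))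
    (φ0 : Agr 0 →ₗ[ℝ] ℝ)
    (hφ1 : φ0 ⟨1, hone⟩ = 1)
    (hpos : ∀ (x : A) (hx : x ∈ Agr 0), x ≠ 0 →
      0 < φ0 ⟨x * x, by simpa using hgrmul 0 0 x x hx hx⟩)
    (k : ℤ) (hk : Int.gcd k c = 1)
    (a : A) (ha : a ∈ Agr (k : ZMod c))
    (hinj : Function.Injective fun x : A => a * x) :
    Ideal.jacobson (⊥ : Ideal A) = ⊥ := by
  haveI : NeZero c := ⟨by omega⟩
  haveI : IsArtinianRing A := isArtinian_of_tower ℝ inferInstance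
  -- `a` is a unit
  have hsurj : Function.Surjective fun x : A => a * x := by
    have h : Function.Injective (LinearMap.mulLeft ℝ a) := hinj
    exact LinearMap.injective_iff_surjective.mp h
  obtain ⟨binv, hbinv⟩ := hsurj 1
  have haunit : IsUnit a := IsUnit.of_mul_eq_one binv hbinv
  -- homogeneous powers of `a`
  have hpow : ∀ n : ℕ, a ^ n ∈ Agr ((n : ZMod c) * (k : ZMod c)) := by
    intro n
    induction n with
    | zero => simpa using hone
    | succ n ih =>
        have h := hgrmul _ _ _ _ ih ha
        rw [pow_succ]
        have : ((n : ZMod c) * (k : ZMod c) + (k : ZMod c)) = ((n + 1 : ℕ) : ZMod c) * (k : ZMod c) := by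
          push_cast
          ring
        rwa [this] at h
  -- a natural number `m` with `m * k ≡ 1 [ZMOD c]`
  obtain ⟨p, q, hpq⟩ := Int.isCoprime_iff_gcd_eq_one.mpr hk
  have hp1 : (p : ZMod c) * (k : ZMod c) = 1 := by
    have h := congrArg (fun t : ℤ => (t : ZMod c)) hpq
    push_cast at h
    simpa [ZMod.natCast_self] using h
  set m : ℕ := (p : ZMod c).val with hm
  have hmval : ((m : ℕ) : ZMod c) = (p : ZMod c) := by
    rw [hm, ZMod.natCast_val, ZMod.cast_id]
  set u : A := a ^ m with hu
  have huu : IsUnit u := haunit.pow m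
  have hu1 : u ∈ Agr 1 := by
    have h := hpow m
    rwa [hmval, hp1] at h
  have hU : ∀ n : ℕ, u ^ n ∈ Agr (n : ZMod c) := by
    intro n
    have h := hpow (m * n)
    rw [hu, ← pow_mul]
    have : ((m * n : ℕ) : ZMod c) * (k : ZMod c) = (n : ZMod c) := by
      push_cast
      rw [mul_comm (m : ZMod c) (n : ZMod c), mul_assoc, hmval, hp1, mul_one]
    rwa [this] at h
  -- exponents realizing `-j`
  set E : ZMod c → ℕ := fun j => c - j.val with hE
  have hEcast : ∀ j : ZMod c, ((E j : ℕ) : ZMod c) = -j := by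
    intro j
    have hle : j.val ≤ c := (ZMod.val_lt j).le
    have : ((E j : ℕ) : ZMod c) = ((c : ℕ) : ZMod c) - ((j.val : ℕ) : ZMod c) := by
      rw [hE]
      push_cast [Nat.cast_sub hle]
      ring
    rw [this, ZMod.natCast_self, ZMod.natCast_val, ZMod.cast_id, zero_sub]
  have hUE : ∀ j : ZMod c, u ^ (E j) ∈ Agr (-j) := fun j => hEcast j ▸ hU (E j)
  -- degree-lowering maps
  set ν : ZMod c → A →ₗ[ℝ] A :=
    fun j => LinearMap.mulLeft ℝ (u ^ (E j)) ∘ₗ grProj hinternal j with hν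
  have hνmem : ∀ (j : ZMod c) (x : A), ν j x ∈ Agr 0 := by
    intro j x
    have h := hgrmul (-j) j _ _ (hUE j) (grProj_mem hinternal j x)
    simpa [hν] using h
  have hνν : ∀ (j : ZMod c) (x y : A), ν j x * ν j y ∈ Agr 0 := fun j x y => by
    simpa using hgrmul 0 0 _ _ (hνmem j x) (hνmem j y)
  have hsqnonneg : ∀ (w : A) (hw : w ∈ Agr 0),
      (0 : ℝ) ≤ φ0 ⟨w * w, by simpa using hgrmul 0 0 w w hw hw⟩ := by
    intro w hw
    rcases eq_or_ne w 0 with rfl | hne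
    · have h0 : (⟨(0 : A) * 0, by simpa using hgrmul 0 0 0 0 hw hw⟩ : Agr 0) = 0 :=
        Subtype.ext (by simp)
      rw [h0, map_zero]
    · exact (hpos w hw hne).le
  -- the twisted inner product
  letI core : InnerProductSpace.Core ℝ A :=
  { inner := fun x y => ∑ j : ZMod c, φ0 ⟨ν j x * ν j y, hνν j x y⟩
    conj_inner_symm := by
      intro x y
      simp only [starRingEnd_apply, star_trivial]
      exact Finset.sum_congr rfl fun j _ => congrArg φ0 (Subtype.ext (mul_comm _ _))
    re_inner_nonneg := by
      intro x
      simp only [RCLike.re_to_real]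
      exact Finset.sum_nonneg fun j _ => hsqnonneg (ν j x) (hνmem j x)
    add_left := by
      intro x y z
      show (∑ j : ZMod c, φ0 ⟨ν j (x + y) * ν j z, hνν j (x + y) z⟩)
        = (∑ j : ZMod c, φ0 ⟨ν j x * ν j z, hνν j x z⟩)
          + (∑ j : ZMod c, φ0 ⟨ν j y * ν j z, hνν j y z⟩)
      rw [← Finset.sum_add_distrib]
      refine Finset.sum_congr rfl fun j _ => ?_
      rw [← map_add]
      refine congrArg φ0 (Subtype.ext ?_)
      show ν j (x + y) * ν j z = ν j x * ν j z + ν j y * ν j z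
      rw [map_add, add_mul]
    smul_left := by
      intro x y r
      simp only [starRingEnd_apply, star_trivial]
      show (∑ j : ZMod c, φ0 ⟨ν j (r • x) * ν j y, hνν j (r • x) y⟩)
        = r * ∑ j : ZMod c, φ0 ⟨ν j x * ν j y, hνν j x y⟩
      rw [Finset.mul_sum]
      refine Finset.sum_congr rfl fun j _ => ?_
      have : (⟨ν j (r • x) * ν j y, hνν j (r • x) y⟩ : Agr 0)
          = r • (⟨ν j x * ν j y, hνν j x y⟩ : Agr 0) := by
        refine Subtype.ext ?_
        show ν j (r • x) * ν j y = r • (ν j x * ν j y)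
        rw [map_smul, smul_mul_assoc]
      rw [this, map_smul, smul_eq_mul]
    definite := by
      intro x hx
      replace hx : (∑ j : ZMod c, φ0 ⟨ν j x * ν j x, hνν j x x⟩) = 0 := hx
      have hz : ∀ j ∈ (Finset.univ : Finset (ZMod c)), φ0 ⟨ν j x * ν j x, hνν j x x⟩ = 0 :=
        (Finset.sum_eq_zero_iff_of_nonneg fun j _ => hsqnonneg (ν j x) (hνmem j x)).mp hx
      have hν0 : ∀ j : ZMod c, ν j x = 0 := by
        intro j
        by_contra hne
        exact absurd (hz j (Finset.mem_univ j)) (ne_of_gt (hpos _ (hνmem j x) hne))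
      have hproj0 : ∀ j : ZMod c, grProj hinternal j x = 0 := by
        intro j
        obtain ⟨w, hw⟩ := (huu.pow (E j)).exists_left_inv
        have h := hν0 j
        simp only [hν, coe_comp, Function.comp_apply, mulLeft_apply] at h
        calc grProj hinternal j x = 1 * grProj hinternal j x := (one_mul _).symm
          _ = w * (u ^ (E j) * grProj hinternal j x) := by rw [← hw]; ring
          _ = 0 := by rw [h, mul_zero]
      rw [← grProj_sum hinternal x]
      exact Finset.sum_eq_zero fun j _ => hproj0 j }
  letI : NormedAddCommGroup A := core.toNormedAddCommGroup
  letI : InnerProductSpace ℝ A := InnerProductSpace.ofCore core.toCore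
  have hinner : ∀ x y : A, (⟪x, y⟫ : ℝ) = ∑ j : ZMod c, φ0 ⟨ν j x * ν j y, hνν j x y⟩ :=
    fun x y => rfl
  -- multiplication by a degree-zero element is symmetric
  have hsymm : ∀ (v : A), v ∈ Agr 0 → ∀ x y : A, ⟪v * x, y⟫ = ⟪x, v * y⟫ := by
    intro v hv x y
    rw [hinner, hinner]
    refine Finset.sum_congr rfl fun j _ => ?_
    refine congrArg φ0 (Subtype.ext ?_)
    show ν j (v * x) * ν j y = ν j x * ν j (v * y)
    have h1 : ∀ z : A, ν j (v * z) = v * ν j z := by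
      intro z
      simp only [hν, coe_comp, Function.comp_apply, mulLeft_apply]
      rw [grProj_mul_of_mem_zero hinternal hgrmul hv]
      ring
    rw [h1, h1]
    ring
  -- positive trace of squares of nonzero degree-zero elements
  have hposTr : ∀ (v : A), v ∈ Agr 0 → v ≠ 0 →
      0 < LinearMap.trace ℝ A (LinearMap.mulLeft ℝ (v * v)) := by
    intro v hv hvne
    have hMM : LinearMap.mulLeft ℝ (v * v) = LinearMap.mulLeft ℝ v * LinearMap.mulLeft ℝ v := by
      ext x
      simp [Module.End.mul_apply, mul_assoc]
    rw [hMM]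
    refine trace_comp_self_pos _ (fun x y => hsymm v hv x y) ?_
    intro h0
    apply hvne
    have h1 : (LinearMap.mulLeft ℝ v) 1 = 0 := by rw [h0]; rfl
    simpa using h1
  -- conclusion
  refine le_antisymm ?_ bot_le
  intro x hx
  rw [Ideal.mem_bot]
  by_contra hxne
  obtain ⟨j, hj⟩ : ∃ j : ZMod c, grProj hinternal j x ≠ 0 := by
    by_contra hall
    push_neg at hall
    exact hxne (by rw [← grProj_sum hinternal x]; exact Finset.sum_eq_zero fun j _ => hall j)
  set xj : A := grProj hinternal j x with hxj
  set v : A := u ^ (E j) * xj with hv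
  have hvmem : v ∈ Agr 0 := by
    simpa using hgrmul (-j) j _ _ (hUE j) (grProj_mem hinternal j x)
  have hvne : v ≠ 0 := by
    intro h0
    obtain ⟨w, hw⟩ := (huu.pow (E j)).exists_left_inv
    apply hj
    calc xj = 1 * xj := (one_mul _).symm
      _ = w * (u ^ (E j) * xj) := by rw [← hw]; ring
      _ = 0 := by rw [← hv, h0, mul_zero]
  set y : A := u ^ (E j) * (u ^ (E j) * xj) with hy
  have hymem : y ∈ Agr (-j + (-j + j)) :=
    hgrmul _ _ _ _ (hUE j) (hgrmul _ _ _ _ (hUE j) (grProj_mem hinternal j x))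
  obtain ⟨n, hn⟩ := IsArtinianRing.isNilpotent_jacobson_bot (R := A)
  have hxy : x * y ∈ Ideal.jacobson (⊥ : Ideal A) := Ideal.mul_mem_right y _ hx
  have hnil : IsNilpotent (x * y) := by
    refine ⟨n, ?_⟩
    have h := Ideal.pow_mem_pow hxy n
    rw [hn] at h
    simpa using h
  have htr0 : LinearMap.trace ℝ A (LinearMap.mulLeft ℝ (x * y)) = 0 := by
    obtain ⟨nn, hnn⟩ := hnil
    have h : IsNilpotent (LinearMap.mulLeft ℝ (x * y)) :=
      ⟨nn, by rw [LinearMap.pow_mulLeft, hnn, LinearMap.mulLeft_zero_eq_zero]⟩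
    have h2 := LinearMap.isNilpotent_trace_of_isNilpotent h
    exact h2.eq_zero
  have hsplit : LinearMap.trace ℝ A (LinearMap.mulLeft ℝ (x * y)) =
      ∑ i : ZMod c, LinearMap.trace ℝ A (LinearMap.mulLeft ℝ (grProj hinternal i x * y)) := by
    have h1 : x * y = ∑ i : ZMod c, grProj hinternal i x * y := by
      rw [← Finset.sum_mul, grProj_sum]
    have h2 : LinearMap.mulLeft ℝ (x * y)
        = ∑ i : ZMod c, LinearMap.mulLeft ℝ (grProj hinternal i x * y) := by
      ext z
      simp only [mulLeft_apply, LinearMap.coe_sum, Finset.sum_apply, h1, Finset.sum_mul]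
    rw [h2, map_sum]
  have hoff : ∀ i : ZMod c, i ≠ j →
      LinearMap.trace ℝ A (LinearMap.mulLeft ℝ (grProj hinternal i x * y)) = 0 := by
    intro i hij
    have hmem : grProj hinternal i x * y ∈ Agr (i + (-j + (-j + j))) :=
      hgrmul _ _ _ _ (grProj_mem hinternal i x) hymem
    have hd : i + (-j + (-j + j)) ≠ 0 := by
      intro h0
      apply hij
      have : i - j = 0 := by rw [← h0]; ring
      exact sub_eq_zero.mp this
    exact trace_mulLeft_eq_zero hinternal hgrmul hd hmem
  have hdiag : xj * y = v * v := by rw [hv, hy]; ring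
  have hfinal : LinearMap.trace ℝ A (LinearMap.mulLeft ℝ (v * v)) = 0 := by
    rw [← hdiag]
    have h := htr0
    rw [hsplit, Finset.sum_eq_single j (fun i _ hij => hoff i hij)
      (fun hj' => absurd (Finset.mem_univ j) hj')] at h
    exact h
  exact absurd hfinal (ne_of_gt (hposTr v hvmem hvne))
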